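/- For every n ≥ 1, every block-splitting family is L_n-splitting; hence μ_n ≤ 𝔟𝔰 = max{𝔟, 𝔰}. -/
import Mathlib


/-- `f ≤* g` : eventual domination. -/
def LeStar (f g : ℕ → ℕ) : Prop := {n | g n < f n}.Finite

/-- The bounding number 𝔟. -/
noncomputable def bNumber : Cardinal :=
  sInf {c | ∃ F : Set (ℕ → ℕ), Cardinal.mk F = c ∧ ∀ g : ℕ → ℕ, ∃ f ∈ F, ¬ LeStar f g}

/-- `S` splits the infinite set `A`. -/
def Splits (S A : Set ℕ) : Prop := (A ∩ S).Infinite ∧ (A \ S).Infinite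

/-- A splitting family. -/
def IsSplittingFamily (𝒮 : Set (Set ℕ)) : Prop :=
  (∀ S ∈ 𝒮, S.Infinite) ∧ ∀ A : Set ℕ, A.Infinite → ∃ S ∈ 𝒮, Splits S A

/-- The splitting number 𝔰. -/
noncomputable def sNumber : Cardinal :=
  sInf {c | ∃ 𝒮 : Set (Set ℕ), IsSplittingFamily 𝒮 ∧ Cardinal.mk 𝒮 = c}

/-- An interval partition is coded by a strictly increasing `e : ℕ → ℕ` with `e 0 = 0`;
the `n`-th interval is `[e n, e (n+1))`. -/
def BlockSplits (S : Set ℕ) (e : ℕ → ℕ) : Prop :=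
  {n : ℕ | Set.Ico (e n) (e (n + 1)) ⊆ S}.Infinite ∧
  {n : ℕ | Set.Ico (e n) (e (n + 1)) ∩ S = ∅}.Infinite

/-- A block-splitting family. -/
def IsBlockSplittingFamily (𝒮 : Set (Set ℕ)) : Prop :=
  (∀ S ∈ 𝒮, S.Infinite) ∧
  ∀ e : ℕ → ℕ, StrictMono e → e 0 = 0 → ∃ S ∈ 𝒮, BlockSplits S e

/-- The block-splitting number 𝔟𝔰. -/
noncomputable def bsNumber : Cardinal :=
  sInf {c | ∃ 𝒮 : Set (Set ℕ), IsBlockSplittingFamily 𝒮 ∧ Cardinal.mk 𝒮 = c}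

/-- `f : [ω]^n → ω^{n+1}` (values strictly increasing tuples) belongs to `L_n`:
no restriction of `f` to the `n`-subsets of an infinite set has image inside a
single cone `C_s` with `s` nonempty. -/
def MemL (n : ℕ) (f : Finset ℕ → (Fin (n + 1) → ℕ)) : Prop :=
  (∀ s : Finset ℕ, s.card = n → StrictMono (f s)) ∧
  ¬ ∃ (X : Set ℕ) (m : ℕ) (_ : 1 ≤ m) (hm : m ≤ n + 1) (t : Fin m → ℕ),
      X.Infinite ∧ ∀ s : Finset ℕ, s.card = n → ↑s ⊆ X →
        ∀ i : Fin m, f s (Fin.castLE hm i) = t i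

/-- `S` `L_n`-splits `f`. -/
def LSplits (n : ℕ) (S : Set ℕ) (f : Finset ℕ → (Fin (n + 1) → ℕ)) : Prop :=
  ∃ X Y : Set ℕ, X.Infinite ∧ Y.Infinite ∧ Disjoint X Y ∧
    (∀ s : Finset ℕ, s.card = n → ↑s ⊆ X → ∀ i, f s i ∈ S) ∧
    (∀ s : Finset ℕ, s.card = n → ↑s ⊆ Y → ∀ i, f s i ∉ S)

/-- An `L_n`-splitting family. -/
def IsLSplittingFamily (n : ℕ) (𝒮 : Set (Set ℕ)) : Prop :=
  (∀ S ∈ 𝒮, S.Infinite) ∧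
  ∀ f : Finset ℕ → (Fin (n + 1) → ℕ), MemL n f → ∃ S ∈ 𝒮, LSplits n S f

/-- `μ_n`, the least size of an `L_n`-splitting family. -/
noncomputable def muNumber (n : ℕ) : Cardinal :=
  sInf {c | ∃ 𝒮 : Set (Set ℕ), IsLSplittingFamily n 𝒮 ∧ Cardinal.mk 𝒮 = c}



theorem myRamsey {C : Type} [Finite C] [Nonempty C] :
    ∀ (r : ℕ) (c : Finset ℕ → C) (Z : Set ℕ), Z.Infinite →
    ∃ Z' : Set ℕ, Z' ⊆ Z ∧ Z'.Infinite ∧ ∃ k : C,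
      ∀ s : Finset ℕ, s.card = r → ↑s ⊆ Z' → c s = k := by
  intro r
  induction r with
  | zero =>
    intro c Z hZ
    refine ⟨Z, le_refl _, hZ, c ∅, fun s hs _ => ?_⟩
    rw [Finset.card_eq_zero] at hs; rw [hs]
  | succ r ih =>
    intro c Z hZ
    have key : ∀ X : Set ℕ, X.Infinite → ∃ Y : Set ℕ,
        (Y ⊆ X ∧ (∀ y ∈ Y, sInf X < y) ∧ Y.Infinite) ∧ ∃ k : C,
        ∀ s : Finset ℕ, s.card = r → ↑s ⊆ Y → c (insert (sInf X) s) = k := by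
      intro X hX
      have h1 : (X \ Set.Iic (sInf X)).Infinite := hX.diff (Set.finite_Iic _)
      obtain ⟨Y, hY1, hY2, k, hk⟩ := ih (fun s => c (insert (sInf X) s)) _ h1
      exact ⟨Y, ⟨fun y hy => (hY1 hy).1, fun y hy => by
        have := (hY1 hy).2; simpa using this, hY2⟩, k, hk⟩
    choose F hF K hK using key
    -- iterate
    let seq : ℕ → {X : Set ℕ // X.Infinite} := fun n =>
      Nat.rec ⟨Z, hZ⟩ (fun _ p => ⟨F p.1 p.2, (hF p.1 p.2).2.2⟩) n
    have seq_succ : ∀ m, (seq (m+1)).1 = F (seq m).1 (seq m).2 := fun m => rfl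
    set a : ℕ → ℕ := fun m => sInf (seq m).1 with ha
    have amem : ∀ m, a m ∈ (seq m).1 := fun m => Nat.sInf_mem (seq m).2.nonempty
    have hsub : ∀ m, (seq (m+1)).1 ⊆ (seq m).1 := fun m => by
      rw [seq_succ]; exact (hF (seq m).1 (seq m).2).1
    have hgt : ∀ m, ∀ y ∈ (seq (m+1)).1, a m < y := fun m y hy => by
      rw [seq_succ] at hy; exact (hF (seq m).1 (seq m).2).2.1 y hy
    have chain : ∀ m l, m ≤ l → (seq l).1 ⊆ (seq m).1 := by
      intro m l hml
      induction l with
      | zero => simp at hml; subst hml; exact le_refl _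
      | succ l ihl =>
        rcases Nat.eq_or_lt_of_le hml with h | h
        · subst h; exact le_refl _
        · exact (ihl (Nat.lt_succ_iff.mp h)).trans' (hsub l) |>.trans (le_refl _)
    have amono : StrictMono a := strictMono_nat_of_lt_succ fun m =>
      hgt m _ (amem (m+1))
    have amemZ : ∀ m, a m ∈ Z := fun m => chain 0 m (Nat.zero_le m) (amem m)
    set col : ℕ → C := fun m => K (seq m).1 (seq m).2 with hcol
    obtain ⟨k, hk⟩ := Finite.exists_infinite_fiber col
    have hfib : {m | col m = k}.Infinite := Set.infinite_coe_iff.mp hk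
    refine ⟨a '' {m | col m = k}, ?_, hfib.image (amono.injective.injOn), k, ?_⟩
    · rintro x ⟨m, _, rfl⟩; exact amemZ m
    · intro s hcard hsubs
      have hne : s.Nonempty := Finset.card_pos.mp (by omega)
      obtain ⟨m₀, hm₀, hx₀⟩ := hsubs (s.min'_mem hne)
      have hsein : ∀ y ∈ s.erase (s.min' hne), y ∈ (seq (m₀+1)).1 := by
        intro y hy
        have hys : y ∈ s := Finset.mem_of_mem_erase hy
        obtain ⟨m, _, hm⟩ := hsubs hys
        have hgt' : a m₀ > a m₀ ∨ a m₀ < a m := by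
          right
          rw [hx₀, hm]
          exact lt_of_le_of_ne (s.min'_le y hys) (by
            intro h; exact (Finset.ne_of_mem_erase hy) h.symm) |>.trans_le (le_refl _)
        rcases hgt' with h | h
        · exact absurd h (lt_irrefl _)
        · have : m₀ < m := amono.lt_iff_lt.mp h
          rw [← hm]
          exact chain (m₀+1) m this (amem m)
      have hcard' : (s.erase (s.min' hne)).card = r := by
        rw [Finset.card_erase_of_mem (s.min'_mem hne)]; omega
      have hsub2 : ↑(s.erase (s.min' hne)) ⊆ (seq (m₀+1)).1 := by
        intro y hy
        exact hsein y (Finset.mem_coe.mp hy)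
      have heq := hK (seq m₀).1 (seq m₀).2 (s.erase (s.min' hne)) hcard' hsub2
      have hins : insert (a m₀) (s.erase (s.min' hne)) = s := by
        rw [hx₀]
        exact Finset.insert_erase (s.min'_mem hne)
      have : c s = col m₀ := by
        rw [← hins]
        exact heq
      rw [this]
      exact hm₀


lemma count_lt_count {t : Finset ℕ} {w w' : ℕ} (hw : w ∈ t) (hw' : w' ∈ t) (h : w < w') :
    ((t.erase w).filter (· < w)).card < ((t.erase w').filter (· < w')).card := by
  apply Finset.card_lt_card
  rw [Finset.ssubset_iff_of_subset]
  · exact ⟨w, by simp [Finset.mem_filter, Finset.mem_erase, h, hw, h.ne], by simp⟩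
  · intro x hx
    simp only [Finset.mem_filter, Finset.mem_erase] at hx ⊢
    exact ⟨⟨by omega, hx.1.2⟩, by omega⟩

lemma count_inj {t : Finset ℕ} {w w' : ℕ} (hw : w ∈ t) (hw' : w' ∈ t)
    (h : ((t.erase w).filter (· < w)).card = ((t.erase w').filter (· < w')).card) : w = w' := by
  rcases lt_trichotomy w w' with hlt | he | hlt
  · exact absurd h (count_lt_count hw hw' hlt).ne
  · exact he
  · exact absurd h.symm (count_lt_count hw' hw hlt).ne

lemma exists_partition (n : ℕ) (hn : 1 ≤ n) (f : Finset ℕ → Fin (n+1) → ℕ) (hf : MemL n f) :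
    ∃ e : ℕ → ℕ, StrictMono e ∧ e 0 = 0 ∧
      ∃ ζ : ℕ → ℕ, StrictMono ζ ∧ (∀ k, e k ≤ ζ k ∧ ζ k < e (k+1)) ∧
      ∀ s : Finset ℕ, s.card = n → (↑s ⊆ Set.range ζ) → ∀ i : Fin (n+1),
        ∃ k, ζ k ∈ s ∧ e k ≤ f s i ∧ f s i < e (k+1) := by
  classical
  set cnt : Finset ℕ → ℕ → ℕ := fun t w => ((t.erase w).filter (· < w)).card with hcntdef
  set χ : Finset ℕ → (Fin (n+1) × Fin (n+1) → Bool) := fun t p =>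
    if h : ∃ w, w ∈ t ∧ cnt t w = (p.2 : ℕ) then
      decide (f (t.erase h.choose) p.1 < h.choose)
    else false with hχ
  obtain ⟨Z₁, _, hZ₁inf, K, hK⟩ := myRamsey (n+1) χ Set.univ Set.infinite_univ
  have χval : ∀ (t : Finset ℕ) (i j : Fin (n+1)) (w : ℕ), w ∈ t → cnt t w = (j : ℕ) →
      χ t (i, j) = decide (f (t.erase w) i < w) := by
    intro t i j w hw hc
    have hex : ∃ w', w' ∈ t ∧ cnt t w' = (j : ℕ) := ⟨w, hw, hc⟩
    show (if h : ∃ w', w' ∈ t ∧ cnt t w' = (j : ℕ) then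
        decide (f (t.erase h.choose) i < h.choose) else false) = _
    rw [dif_pos hex]
    have hch := hex.choose_spec
    have heq : hex.choose = w := count_inj hch.1 hw (hch.2.trans hc.symm)
    rw [heq]
  have key1 : ∀ s : Finset ℕ, s.card = n → ↑s ⊆ Z₁ → ∀ w ∈ Z₁, w ∉ s →
      ∀ (i : Fin (n+1)) (j : Fin (n+1)), (s.filter (· < w)).card = (j : ℕ) →
      (f s i < w ↔ K (i, j) = true) := by
    intro s hcard hsZ w hwZ hws i j hj
    have hcardt : (insert w s).card = n + 1 := by
      rw [Finset.card_insert_of_notMem hws, hcard]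
    have hsubt : ↑(insert w s) ⊆ Z₁ := by
      intro x hx
      rcases Finset.mem_insert.mp (Finset.mem_coe.mp hx) with rfl | hx'
      · exact hwZ
      · exact hsZ (Finset.mem_coe.mpr hx')
    have hKt := hK (insert w s) hcardt hsubt
    have hcntw : cnt (insert w s) w = (j : ℕ) := by
      rw [hcntdef]
      simp only [Finset.erase_insert hws]
      exact hj
    have hval := (χval (insert w s) i j w (Finset.mem_insert_self w s) hcntw).symm.trans
      (congrFun hKt (i, j))
    rw [Finset.erase_insert hws] at hval
    rw [← hval]
    simp
  -- global bit facts
  have fact_top : ∀ i : Fin (n+1), K (i, ⟨n, by omega⟩) = true := by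
    intro i
    by_contra hcon
    obtain ⟨s₀, hs₀Z, hs₀card⟩ := hZ₁inf.exists_subset_card_eq n
    have hne : s₀.Nonempty := Finset.card_pos.mp (by omega)
    obtain ⟨w, hwZ, hwgt⟩ := hZ₁inf.exists_gt (max (s₀.max' hne) (f s₀ i))
    have hws : w ∉ s₀ := fun hmem => by
      have := s₀.le_max' w hmem
      omega
    have hcnt : (s₀.filter (· < w)).card = ((⟨n, by omega⟩ : Fin (n+1)) : ℕ) := by
      have : s₀.filter (· < w) = s₀ := Finset.filter_eq_self.mpr (fun x hx => by
        have := s₀.le_max' x hx; omega)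
      rw [this, hs₀card]
    have hlt : f s₀ i < w := by omega
    have := (key1 s₀ hs₀card hs₀Z w hwZ hws i ⟨n, by omega⟩ hcnt).mp hlt
    exact hcon this
  have fact_bot : ∀ i : Fin (n+1), K (i, ⟨0, by omega⟩) = false := by
    intro i
    by_contra hcon
    rw [Bool.not_eq_false] at hcon
    set z₀ := sInf Z₁ with hz₀
    have hz₀Z : z₀ ∈ Z₁ := Nat.sInf_mem hZ₁inf.nonempty
    have hZ₁'inf : (Z₁ \ Set.Iic z₀).Infinite := hZ₁inf.diff (Set.finite_Iic _)
    have hbound : ∀ s : Finset ℕ, s.card = n → ↑s ⊆ Z₁ \ Set.Iic z₀ → f s i < z₀ := by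
      intro s hcard hsub
      have hsZ : ↑s ⊆ Z₁ := fun x hx => (hsub hx).1
      have hgt : ∀ x ∈ s, z₀ < x := fun x hx => by
        have := (hsub (Finset.mem_coe.mpr hx)).2
        simp [Set.mem_Iic] at this
        omega
      have hws : z₀ ∉ s := fun hmem => absurd (hgt _ hmem) (lt_irrefl _)
      have hcnt : (s.filter (· < z₀)).card = ((⟨0, by omega⟩ : Fin (n+1)) : ℕ) := by
        have : s.filter (· < z₀) = ∅ := Finset.filter_eq_empty_iff.mpr (fun {x} hx => by
          have := hgt x hx; omega)
        rw [this]
        rfl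
      exact (key1 s hcard hsZ z₀ hz₀Z hws i ⟨0, by omega⟩ hcnt).mpr hcon
    rcases Nat.eq_zero_or_pos z₀ with hz | hz
    · obtain ⟨s, hsub, hcard⟩ := hZ₁'inf.exists_subset_card_eq n
      have := hbound s hcard hsub
      omega
    · haveI : NeZero z₀ := ⟨by omega⟩
      have hmle : i.val + 1 ≤ n + 1 := by omega
      obtain ⟨X, hXsub, hXinf, κ, hκ⟩ := myRamsey n
        (fun s => (fun j : Fin (i.val+1) =>
          (⟨min (f s (Fin.castLE hmle j)) (z₀-1), by omega⟩ : Fin z₀))) _ hZ₁'inf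
      apply hf.2
      refine ⟨X, i.val+1, by omega, hmle, fun j => (κ j : ℕ), hXinf, ?_⟩
      intro s hcard hsub j
      have hcolor := congrFun (hκ s hcard hsub) j
      have hfsi : f s i < z₀ := hbound s hcard (fun x hx => hXsub (hsub hx))
      have hle : f s (Fin.castLE hmle j) ≤ f s i := by
        apply (hf.1 s hcard).monotone
        have : (j : ℕ) ≤ i.val := by omega
        exact this
      have hmin : min (f s (Fin.castLE hmle j)) (z₀-1) = f s (Fin.castLE hmle j) :=
        min_eq_left (by omega)
      have := congrArg Fin.val hcolor
      simp only [hmin] at this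
      exact this
  -- build W sequence
  have hnxt : ∀ x : ℕ, ∃ y ∈ Z₁, x < y := fun x => hZ₁inf.exists_gt x
  choose nxt hnxtZ hnxtgt using hnxt
  set W : ℕ → ℕ := fun m => Nat.rec (nxt 0) (fun _ y => nxt y) m with hWdef
  have hWsucc : ∀ m, W (m+1) = nxt (W m) := fun m => rfl
  have hWZ : ∀ m, W m ∈ Z₁ := by
    intro m
    induction m with
    | zero => exact hnxtZ 0
    | succ m ih => rw [hWsucc]; exact hnxtZ _
  have hWmono : StrictMono W := strictMono_nat_of_lt_succ fun m => by
    rw [hWsucc]; exact hnxtgt (W m)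
  have hW0pos : 0 < W 0 := hnxtgt 0
  set e : ℕ → ℕ := fun k => Nat.casesOn k 0 (fun k => W (3*k+2)) with hedef
  have he0 : e 0 = 0 := rfl
  have hesucc : ∀ k, e (k+1) = W (3*k+2) := fun k => rfl
  have hemono : StrictMono e := strictMono_nat_of_lt_succ fun k => by
    cases k with
    | zero =>
      show 0 < W (3*0+2)
      exact lt_of_lt_of_le hW0pos (hWmono.monotone (Nat.zero_le (3*0+2)))
    | succ k =>
      show W (3*k+2) < W (3*(k+1)+2)
      exact hWmono (show 3*k+2 < 3*(k+1)+2 by omega)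
  set ζ : ℕ → ℕ := fun k => W (3*k+1) with hζdef
  have hζmono : StrictMono ζ := fun a b hab => hWmono (show 3*a+1 < 3*b+1 by omega)
  have hπe : ∀ k, e k ≤ W (3*k) := fun k => by
    cases k with
    | zero => exact Nat.zero_le _
    | succ k =>
      show W (3*k+2) ≤ W (3*(k+1))
      exact (hWmono (show 3*k+2 < 3*(k+1) by omega)).le
  have hζmem : ∀ k, e k ≤ ζ k ∧ ζ k < e (k+1) := fun k => by
    constructor
    · exact le_trans (hπe k) (hWmono (show 3*k < 3*k+1 by omega)).le
    · show W (3*k+1) < W (3*k+2)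
      exact hWmono (show 3*k+1 < 3*k+2 by omega)
  refine ⟨e, hemono, he0, ζ, hζmono, hζmem, ?_⟩
  -- master lemma
  intro s hcard hrange i
  have hsZ₁ : ↑s ⊆ Z₁ := fun x hx => by
    obtain ⟨k, rfl⟩ := hrange hx
    show W (3*k+1) ∈ Z₁
    exact hWZ (3*k+1)
  have hne : s.Nonempty := Finset.card_pos.mp (by omega)
  set G := s.filter (fun x => ∃ k, ζ k = x ∧ W (3*k) ≤ f s i) with hGdef
  have hminG : s.min' hne ∈ G := by
    obtain ⟨k₀, hk₀⟩ := hrange (Finset.mem_coe.mpr (s.min'_mem hne))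
    refine Finset.mem_filter.mpr ⟨s.min'_mem hne, k₀, hk₀, ?_⟩
    by_contra hcon
    push_neg at hcon
    have hwlt : W (3*k₀) < s.min' hne := by
      rw [← hk₀]
      exact hWmono (show 3*k₀ < 3*k₀+1 by omega)
    have hws : W (3*k₀) ∉ s := fun hmem => absurd (s.min'_le _ hmem) (not_le.mpr hwlt)
    have hcnt0 : (s.filter (· < W (3*k₀))).card = ((⟨0, by omega⟩ : Fin (n+1)) : ℕ) := by
      have : s.filter (· < W (3*k₀)) = ∅ := Finset.filter_eq_empty_iff.mpr (fun {x} hx => by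
        have := s.min'_le x hx; omega)
      rw [this]; rfl
    have := (key1 s hcard hsZ₁ _ (hWZ _) hws i ⟨0, by omega⟩ hcnt0).mp hcon
    rw [fact_bot i] at this
    exact Bool.false_ne_true this
  have hGne : G.Nonempty := ⟨_, hminG⟩
  obtain ⟨hxs, k₁, hζk₁, hπk₁⟩ := Finset.mem_filter.mp (G.max'_mem hGne)
  set xm := G.max' hGne with hxm
  have hlow : e k₁ ≤ f s i := le_trans (hπe k₁) hπk₁
  refine ⟨k₁, by rw [hζk₁]; exact hxs, hlow, ?_⟩
  show f s i < W (3*k₁+2)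
  by_cases hmaxc : ∀ y ∈ s, y ≤ xm
  · have h1 : xm < W (3*k₁+2) := by
      rw [← hζk₁]; exact hWmono (show 3*k₁+1 < 3*k₁+2 by omega)
    have hws : W (3*k₁+2) ∉ s := fun hmem => by
      have := hmaxc _ hmem; omega
    have hcnt : (s.filter (· < W (3*k₁+2))).card = ((⟨n, by omega⟩ : Fin (n+1)) : ℕ) := by
      have : s.filter (· < W (3*k₁+2)) = s := Finset.filter_eq_self.mpr (fun x hx => by
        have := hmaxc x hx; omega)
      rw [this, hcard]
    exact (key1 s hcard hsZ₁ (W (3*k₁+2)) (hWZ (3*k₁+2)) hws i ⟨n, by omega⟩ hcnt).mpr (fact_top i)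
  · push_neg at hmaxc
    obtain ⟨y₀, hy₀s, hy₀gt⟩ := hmaxc
    have hTne : (s.filter (fun y => xm < y)).Nonempty :=
      ⟨y₀, Finset.mem_filter.mpr ⟨hy₀s, hy₀gt⟩⟩
    set x' := (s.filter (fun y => xm < y)).min' hTne with hx'def
    have hx'mem := Finset.mem_filter.mp ((s.filter (fun y => xm < y)).min'_mem hTne)
    have hx's : x' ∈ s := hx'mem.1
    have hx'gt : xm < x' := hx'mem.2
    have hx'min : ∀ y ∈ s, xm < y → x' ≤ y := fun y hy hgt =>
      Finset.min'_le _ y (Finset.mem_filter.mpr ⟨hy, hgt⟩)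
    obtain ⟨k', hζk'⟩ := hrange (Finset.mem_coe.mpr hx's)
    have hkk : k₁ < k' := by
      have h0 : W (3*k₁+1) < W (3*k'+1) := by
        show ζ k₁ < ζ k'
        rw [hζk₁, hζk']; exact hx'gt
      have := (hWmono.lt_iff_lt (a := 3*k₁+1) (b := 3*k'+1)).mp h0
      omega
    have hx'G : x' ∉ G := fun hmem => absurd (Finset.le_max' G x' hmem) (not_le.mpr hx'gt)
    have hflt : f s i < W (3*k') := by
      by_contra hcon
      push_neg at hcon
      exact hx'G (Finset.mem_filter.mpr ⟨hx's, k', hζk', hcon⟩)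
    have h1 : xm < W (3*k₁+2) := by
      rw [← hζk₁]; exact hWmono (show 3*k₁+1 < 3*k₁+2 by omega)
    have h4 : W (3*k₁+2) < W (3*k') := hWmono (show 3*k₁+2 < 3*k' by omega)
    have h2 : W (3*k') < x' := by
      rw [← hζk']; exact hWmono (show 3*k' < 3*k'+1 by omega)
    have hniπ : W (3*k') ∉ s := fun hmem => by
      rcases le_or_gt (W (3*k')) xm with h | h
      · omega
      · have := hx'min _ hmem h; omega
    have hniσ : W (3*k₁+2) ∉ s := fun hmem => by
      rcases le_or_gt (W (3*k₁+2)) xm with h | h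
      · omega
      · have := hx'min _ hmem h; omega
    have hjle : (s.filter (· < x')).card ≤ n := by
      rw [← hcard]; exact Finset.card_filter_le s _
    have hfilt : ∀ w : ℕ, xm < w → w ≤ W (3*k') → s.filter (· < w) = s.filter (· < x') := by
      intro w hw1 hw2
      ext y
      simp only [Finset.mem_filter, decide_eq_true_eq]
      constructor
      · rintro ⟨hy, hylt⟩; exact ⟨hy, by omega⟩
      · rintro ⟨hy, hylt⟩
        refine ⟨hy, ?_⟩
        rcases le_or_gt y xm with h | h
        · omega
        · have := hx'min y hy h; omega
    have hcntπ : (s.filter (· < W (3*k'))).card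
        = ((⟨(s.filter (· < x')).card, by omega⟩ : Fin (n+1)) : ℕ) := by
      rw [hfilt _ (by omega) (le_refl _)]
    have hcntσ : (s.filter (· < W (3*k₁+2))).card
        = ((⟨(s.filter (· < x')).card, by omega⟩ : Fin (n+1)) : ℕ) := by
      rw [hfilt _ h1 h4.le]
    have hbit := (key1 s hcard hsZ₁ (W (3*k')) (hWZ (3*k')) hniπ i ⟨(s.filter (· < x')).card, by omega⟩ hcntπ).mp hflt
    exact (key1 s hcard hsZ₁ (W (3*k₁+2)) (hWZ (3*k₁+2)) hniσ i ⟨(s.filter (· < x')).card, by omega⟩ hcntσ).mpr hbit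

theorem blockToL (n : ℕ) (hn : 1 ≤ n) (𝒮 : Set (Set ℕ)) (h : IsBlockSplittingFamily 𝒮) :
    IsLSplittingFamily n 𝒮 := by
  refine ⟨h.1, fun f hf => ?_⟩
  obtain ⟨e, hemono, he0, ζ, hζmono, hζmem, hmaster⟩ := exists_partition n hn f hf
  obtain ⟨S, hS𝒮, hbs⟩ := h.2 e hemono he0
  refine ⟨S, hS𝒮, ζ '' {k | Set.Ico (e k) (e (k+1)) ⊆ S},
    ζ '' {k | Set.Ico (e k) (e (k+1)) ∩ S = ∅},
    hbs.1.image (hζmono.injective.injOn), hbs.2.image (hζmono.injective.injOn), ?_, ?_, ?_⟩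
  · rw [Set.disjoint_left]
    rintro x ⟨k, hk, rfl⟩ ⟨k', hk', hee⟩
    have hkk : k' = k := hζmono.injective hee
    subst hkk
    have hmem : ζ k' ∈ Set.Ico (e k') (e (k'+1)) := ⟨(hζmem k').1, (hζmem k').2⟩
    have : ζ k' ∈ (∅ : Set ℕ) := hk' ▸ (⟨hmem, hk hmem⟩ : ζ k' ∈ Set.Ico (e k') (e (k'+1)) ∩ S)
    exact this
  · intro s hcard hsub i
    have hrange : ↑s ⊆ Set.range ζ := fun x hx => by
      obtain ⟨k, _, rfl⟩ := hsub hx; exact ⟨k, rfl⟩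
    obtain ⟨k, hks, hge, hlt⟩ := hmaster s hcard hrange i
    obtain ⟨k₀, hk₀A, hk₀e⟩ := hsub (Finset.mem_coe.mpr hks)
    have hkk : k₀ = k := hζmono.injective hk₀e
    subst hkk
    exact hk₀A ⟨hge, hlt⟩
  · intro s hcard hsub i hmemS
    have hrange : ↑s ⊆ Set.range ζ := fun x hx => by
      obtain ⟨k, _, rfl⟩ := hsub hx; exact ⟨k, rfl⟩
    obtain ⟨k, hks, hge, hlt⟩ := hmaster s hcard hrange i
    obtain ⟨k₀, hk₀B, hk₀e⟩ := hsub (Finset.mem_coe.mpr hks)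
    have hkk : k₀ = k := hζmono.injective hk₀e
    subst hkk
    have : f s i ∈ (∅ : Set ℕ) := hk₀B ▸ (⟨⟨hge, hlt⟩, hmemS⟩ :
      f s i ∈ Set.Ico (e k₀) (e (k₀+1)) ∩ S)
    exact this

theorem blockFamilyUniv : IsBlockSplittingFamily {S : Set ℕ | S.Infinite} := by
  refine ⟨fun S hS => hS, fun e hemono he0 => ?_⟩
  set S : Set ℕ := {x | ∃ k, e (2*k) ≤ x ∧ x < e (2*k+1)} with hSdef
  have hIcoS : ∀ k, Set.Ico (e (2*k)) (e (2*k+1)) ⊆ S := fun k x hx => ⟨k, hx.1, hx.2⟩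
  have hSinf : S.Infinite := by
    have : Set.range (fun k => e (2*k)) ⊆ S := by
      rintro x ⟨k, rfl⟩
      exact ⟨k, le_refl _, hemono (by omega)⟩
    exact Set.Infinite.mono this
      (Set.infinite_range_of_injective (fun a b hab =>
        by have := hemono.injective hab; omega))
  refine ⟨S, hSinf, ?_, ?_⟩
  · have hsub : Set.range (fun k => 2*k) ⊆ {m | Set.Ico (e m) (e (m+1)) ⊆ S} := by
      rintro m ⟨k, rfl⟩
      exact hIcoS k
    exact Set.Infinite.mono hsub (Set.infinite_range_of_injective (fun a b hab => by omega))
  · have hsub : Set.range (fun k => 2*k+1) ⊆ {m | Set.Ico (e m) (e (m+1)) ∩ S = ∅} := by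
      rintro m ⟨k, rfl⟩
      show Set.Ico (e (2*k+1)) (e (2*k+1+1)) ∩ S = ∅
      rw [Set.eq_empty_iff_forall_notMem]
      rintro x ⟨⟨hx1, hx2⟩, j, hj1, hj2⟩
      rcases le_or_gt j k with h | h
      · have : e (2*j+1) ≤ e (2*k+1) := hemono.monotone (by omega)
        omega
      · have : e (2*k+1+1) ≤ e (2*j) := hemono.monotone (by omega)
        omega
    exact Set.Infinite.mono hsub (Set.infinite_range_of_injective (fun a b hab => by omega))

theorem blockToSplit (𝒮 : Set (Set ℕ)) (h : IsBlockSplittingFamily 𝒮) : IsSplittingFamily 𝒮 := by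
  refine ⟨h.1, fun A hA => ?_⟩
  choose nxt hnxtA hnxtgt using fun x => hA.exists_gt x
  set e : ℕ → ℕ := fun k => Nat.rec 0 (fun _ y => nxt y + 1) k with hedef
  have he0 : e 0 = 0 := rfl
  have hesucc : ∀ k, e (k+1) = nxt (e k) + 1 := fun k => rfl
  have hemono : StrictMono e := strictMono_nat_of_lt_succ fun k => by
    rw [hesucc]
    have := hnxtgt (e k)
    omega
  have hmemIco : ∀ k, nxt (e k) ∈ Set.Ico (e k) (e (k+1)) := fun k => by
    rw [hesucc]
    exact ⟨(hnxtgt (e k)).le, by omega⟩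
  have hinj : Function.Injective (fun k => nxt (e k)) := by
    intro a b hab
    have hab' : nxt (e a) = nxt (e b) := hab
    by_contra hne
    have ha := hmemIco a
    have hb := hmemIco b
    rw [Set.mem_Ico] at ha hb
    rcases Nat.lt_or_ge a b with hl | hg
    · have h1 : e (a+1) ≤ e b := hemono.monotone hl
      omega
    · have hl : b < a := by omega
      have h1 : e (b+1) ≤ e a := hemono.monotone hl
      omega
  obtain ⟨S, hS𝒮, hbs⟩ := h.2 e hemono he0
  refine ⟨S, hS𝒮, ?_, ?_⟩
  · have hsub : (fun k => nxt (e k)) '' {m | Set.Ico (e m) (e (m+1)) ⊆ S} ⊆ A ∩ S := by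
      rintro x ⟨k, hk, rfl⟩
      exact ⟨hnxtA (e k), hk (hmemIco k)⟩
    exact Set.Infinite.mono hsub (hbs.1.image hinj.injOn)
  · have hsub : (fun k => nxt (e k)) '' {m | Set.Ico (e m) (e (m+1)) ∩ S = ∅} ⊆ A \ S := by
      rintro x ⟨k, hk, rfl⟩
      refine ⟨hnxtA (e k), fun hmem => ?_⟩
      have : nxt (e k) ∈ (∅ : Set ℕ) := hk ▸ ⟨hmemIco k, hmem⟩
      exact this
    exact Set.Infinite.mono hsub (hbs.2.image hinj.injOn)

lemma bs_nonempty : {c | ∃ 𝒮 : Set (Set ℕ), IsBlockSplittingFamily 𝒮 ∧ Cardinal.mk 𝒮 = c}.Nonempty :=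
  ⟨_, {S : Set ℕ | S.Infinite}, blockFamilyUniv, rfl⟩

lemma mu_le_bs (n : ℕ) (hn : 1 ≤ n) : muNumber n ≤ bsNumber := by
  apply csInf_le_csInf (OrderBot.bddBelow _) bs_nonempty
  rintro c ⟨𝒮, h𝒮, hc⟩
  exact ⟨𝒮, blockToL n hn 𝒮 h𝒮, hc⟩

lemma s_le_bs : sNumber ≤ bsNumber := by
  apply csInf_le_csInf (OrderBot.bddBelow _) bs_nonempty
  rintro c ⟨𝒮, h𝒮, hc⟩
  exact ⟨𝒮, blockToSplit 𝒮 h𝒮, hc⟩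

lemma b_le_bs : bNumber ≤ bsNumber := by
  apply le_csInf bs_nonempty
  rintro c ⟨𝒮, h𝒮, rfl⟩
  classical
  have hnext : ∀ S : Set ℕ, S ∈ 𝒮 → ∀ x : ℕ, ∃ y ∈ S, x < y := fun S hS x =>
    (h𝒮.1 S hS).exists_gt x
  set nf : Set ℕ → ℕ → ℕ := fun S x => sInf {y | y ∈ S ∧ x < y} with hnfdef
  have hnf : ∀ S ∈ 𝒮, ∀ x, nf S x ∈ S ∧ x < nf S x := by
    intro S hS x
    have hne : {y | y ∈ S ∧ x < y}.Nonempty := by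
      obtain ⟨y, hy1, hy2⟩ := hnext S hS x
      exact ⟨y, hy1, hy2⟩
    exact Nat.sInf_mem hne
  set F : Set (ℕ → ℕ) := nf '' 𝒮 with hFdef
  have hFub : ∀ g : ℕ → ℕ, ∃ f ∈ F, ¬ LeStar f g := by
    intro g
    set h' : ℕ → ℕ := fun x => (Finset.range (x+1)).sup g + x + 1 with hh'def
    set e : ℕ → ℕ := fun k => Nat.rec 0 (fun _ y => h' y) k with hedef
    have hesucc : ∀ k, e (k+1) = h' (e k) := fun k => rfl
    have hemono : StrictMono e := strictMono_nat_of_lt_succ fun k => by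
      rw [hesucc, hh'def]
      simp only []
      omega
    obtain ⟨S, hS𝒮, hbs⟩ := h𝒮.2 e hemono rfl
    refine ⟨nf S, ⟨S, hS𝒮, rfl⟩, ?_⟩
    intro hfin
    have hfin' : {x | g x < nf S x}.Finite := hfin
    have himg : ((fun k => e k) '' {m | Set.Ico (e m) (e (m+1)) ∩ S = ∅}).Infinite :=
      hbs.2.image (fun a _ b _ hab => hemono.injective hab)
    have hsub2 : (fun k => e k) '' {m | Set.Ico (e m) (e (m+1)) ∩ S = ∅} ⊆ {x | g x < nf S x} := by
      rintro x ⟨k, hk, rfl⟩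
      show g (e k) < nf S (e k)
      have h1 := hnf S hS𝒮 (e k)
      have h2 : nf S (e k) ∉ Set.Ico (e k) (e (k+1)) := fun hmem => by
        have : nf S (e k) ∈ (∅ : Set ℕ) := hk ▸ ⟨hmem, h1.1⟩
        exact this
      have h3 : e (k+1) ≤ nf S (e k) := by
        rcases lt_or_ge (nf S (e k)) (e (k+1)) with h | h
        · exact absurd ⟨h1.2.le, h⟩ h2
        · exact h
      have h4 : g (e k) < h' (e k) := by
        rw [hh'def]
        simp only []
        have : g (e k) ≤ (Finset.range (e k + 1)).sup g :=
          Finset.le_sup (Finset.mem_range.mpr (by omega))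
        omega
      rw [hesucc] at h3
      omega
    exact (Set.Infinite.mono hsub2 himg) hfin'
  calc bNumber ≤ Cardinal.mk F := csInf_le (OrderBot.bddBelow _) ⟨F, rfl, hFub⟩
  _ ≤ Cardinal.mk 𝒮 := Cardinal.mk_image_le

lemma aleph0_le_b : Cardinal.aleph0 ≤ bNumber := by
  apply le_csInf
  · refine ⟨Cardinal.mk (Set.univ : Set (ℕ → ℕ)), Set.univ, rfl, fun g => ?_⟩
    refine ⟨fun x => g x + 1, Set.mem_univ _, fun hfin => ?_⟩
    have hfin' : {n : ℕ | g n < g n + 1}.Finite := hfin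
    have huniv : {n : ℕ | g n < g n + 1} = Set.univ := by
      ext x; simp
    rw [huniv] at hfin'
    exact Set.infinite_univ hfin'
  · rintro c ⟨F, hmk, hub⟩
    by_contra hlt
    push_neg at hlt
    have hFfin : F.Finite := by
      rw [← Cardinal.lt_aleph0_iff_set_finite, hmk]
      exact hlt
    classical
    set g : ℕ → ℕ := fun x => hFfin.toFinset.sup (fun f => f x) with hgdef
    obtain ⟨f, hfF, hnles⟩ := hub g
    apply hnles
    have : {n : ℕ | g n < f n} = ∅ := by
      rw [Set.eq_empty_iff_forall_notMem]
      intro x hx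
      have : f x ≤ g x := Finset.le_sup (f := fun f => f x) (hFfin.mem_toFinset.mpr hfF)
      exact absurd hx (by simp; omega)
    show ({n | g n < f n}).Finite
    rw [this]
    exact Set.finite_empty

lemma b_nonempty :
    {c | ∃ F : Set (ℕ → ℕ), Cardinal.mk F = c ∧ ∀ g : ℕ → ℕ, ∃ f ∈ F, ¬ LeStar f g}.Nonempty := by
  refine ⟨Cardinal.mk (Set.univ : Set (ℕ → ℕ)), Set.univ, rfl, fun g => ?_⟩
  refine ⟨fun x => g x + 1, Set.mem_univ _, fun hfin => ?_⟩
  have hfin' : {n : ℕ | g n < g n + 1}.Finite := hfin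
  have huniv : {n : ℕ | g n < g n + 1} = Set.univ := by ext x; simp
  rw [huniv] at hfin'
  exact Set.infinite_univ hfin'

lemma s_nonempty :
    {c | ∃ 𝒮 : Set (Set ℕ), IsSplittingFamily 𝒮 ∧ Cardinal.mk 𝒮 = c}.Nonempty :=
  ⟨_, {S : Set ℕ | S.Infinite}, blockToSplit _ blockFamilyUniv, rfl⟩

lemma bs_le_max : bsNumber ≤ max bNumber sNumber := by
  classical
  obtain ⟨F₀, hF₀mk, hF₀ub⟩ := csInf_mem b_nonempty
  obtain ⟨𝒮₀, h𝒮₀, h𝒮₀mk⟩ := csInf_mem s_nonempty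
  have hF₀mk' : Cardinal.mk ↥F₀ = bNumber := hF₀mk
  have h𝒮₀mk' : Cardinal.mk ↥𝒮₀ = sNumber := h𝒮₀mk
  set mod : (ℕ → ℕ) → (ℕ → ℕ) := fun f x => (Finset.range (x+1)).sup f + x + 1 with hmod
  have hmodmono : ∀ f, StrictMono (mod f) := fun f => strictMono_nat_of_lt_succ fun x => by
    have h1 : (Finset.range (x+1)).sup f ≤ (Finset.range (x+1+1)).sup f :=
      Finset.sup_mono (by intro y hy; simp only [Finset.mem_range] at hy ⊢; omega)
    show (Finset.range (x+1)).sup f + x + 1 < (Finset.range (x+1+1)).sup f + (x+1) + 1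
    omega
  have hmodgt : ∀ f x, x < mod f x := fun f x => by
    show x < (Finset.range (x+1)).sup f + x + 1
    omega
  have hmodge : ∀ f x, f x ≤ mod f x := fun f x => by
    have : f x ≤ (Finset.range (x+1)).sup f := Finset.le_sup (Finset.mem_range.mpr (by omega))
    show f x ≤ (Finset.range (x+1)).sup f + x + 1
    omega
  set DD : (ℕ → ℕ) → Set ℕ → Set ℕ :=
    fun f S => {x | ∃ m ∈ S, f^[m] 0 ≤ x ∧ x < f^[m+1] 0} with hDD
  set 𝒮₁ : Set (Set ℕ) := Set.range (fun p : ↥F₀ × ↥𝒮₀ => DD (mod p.1.1) p.2.1) with h𝒮₁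
  have hblock : IsBlockSplittingFamily 𝒮₁ := by
    constructor
    · rintro S ⟨⟨f₀, S₀⟩, rfl⟩
      have hitmono : StrictMono (fun m => (mod f₀.1)^[m] 0) := strictMono_nat_of_lt_succ fun m => by
        show (mod f₀.1)^[m] 0 < (mod f₀.1)^[m+1] 0
        rw [Function.iterate_succ_apply']
        exact hmodgt f₀.1 _
      have hS₀inf : S₀.1.Infinite := h𝒮₀.1 S₀.1 S₀.2
      have hsub : (fun m => (mod f₀.1)^[m] 0) '' S₀.1 ⊆ DD (mod f₀.1) S₀.1 := by
        rintro x ⟨m, hm, rfl⟩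
        refine ⟨m, hm, le_refl _, ?_⟩
        rw [Function.iterate_succ_apply']
        exact hmodgt _ _
      exact Set.Infinite.mono hsub (hS₀inf.image hitmono.injective.injOn)
    · intro e hemono he0
      obtain ⟨f₀, hf₀F, hnles⟩ := hF₀ub (fun x => e (x+3))
      have hT : {x | e (x+3) < f₀ x}.Infinite := hnles
      have hT' : {x | e (x+3) < mod f₀ x}.Infinite :=
        Set.Infinite.mono (fun x hx => lt_of_lt_of_le hx (hmodge f₀ x)) hT
      set itr : ℕ → ℕ := fun m => (mod f₀)^[m] 0 with hitr
      have hit0 : itr 0 = 0 := rfl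
      have hitsucc : ∀ m, itr (m+1) = mod f₀ (itr m) := fun m =>
        Function.iterate_succ_apply' (mod f₀) m 0
      have hitmono : StrictMono itr := strictMono_nat_of_lt_succ fun m => by
        rw [hitsucc]; exact hmodgt f₀ _
      have hfmono := hmodmono f₀
      have hJdisj : ∀ {M M' v : ℕ}, itr M ≤ v → v < itr (M+1) → itr M' ≤ v →
          v < itr (M'+1) → M = M' := by
        intro M M' v h1 h2 h3 h4
        by_contra hne
        rcases Nat.lt_or_ge M M' with h | h
        · have : itr (M+1) ≤ itr M' := hitmono.monotone (by omega)
          omega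
        · have hlt : M' < M := by omega
          have : itr (M'+1) ≤ itr M := hitmono.monotone (by omega)
          omega
      set Af : Set ℕ :=
        {M | ∃ l, Set.Ico (e l) (e (l+1)) ⊆ Set.Ico (itr M) (itr (M+1))} with hAf
      have hclaim : ∀ x, e (x+3) < mod f₀ x → ∃ M l, x < e l ∧
          Set.Ico (e l) (e (l+1)) ⊆ Set.Ico (itr M) (itr (M+1)) := by
        intro x hx
        have hek : ∀ k : ℕ, e k ≤ x → k ≤ x := fun k h => le_trans hemono.le_apply h
        obtain ⟨k, hk1, hk2⟩ : ∃ k, e k ≤ x ∧ x < e (k+1) := by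
          refine ⟨Nat.findGreatest (fun j => e j ≤ x) x, ?_, ?_⟩
          · exact Nat.findGreatest_spec (P := fun j => e j ≤ x) (m := 0) (Nat.zero_le x)
              (by simp [he0])
          · by_contra hcon
            push_neg at hcon
            have hle : Nat.findGreatest (fun j => e j ≤ x) x + 1 ≤ x := hek _ hcon
            have := Nat.le_findGreatest (P := fun j => e j ≤ x) hle hcon
            omega
        have hkx : k ≤ x := hek k hk1
        have hfx : e (k+3) < mod f₀ x := lt_of_le_of_lt (hemono.monotone (by omega)) hx
        have hitk : ∀ m, itr m ≤ x → m ≤ x := fun m h => le_trans hitmono.le_apply h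
        obtain ⟨m, hm1, hm2⟩ : ∃ m, itr m ≤ x ∧ x < itr (m+1) := by
          refine ⟨Nat.findGreatest (fun j => itr j ≤ x) x, ?_, ?_⟩
          · exact Nat.findGreatest_spec (P := fun j => itr j ≤ x) (m := 0) (Nat.zero_le x)
              (by simp [hit0])
          · by_contra hcon
            push_neg at hcon
            have hle : Nat.findGreatest (fun j => itr j ≤ x) x + 1 ≤ x := hitk _ hcon
            have := Nat.le_findGreatest (P := fun j => itr j ≤ x) hle hcon
            omega
        have hyx : x < itr (m+1) := hm2
        have hfy : mod f₀ x < mod f₀ (itr (m+1)) := hfmono hyx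
        have hfy3 : e (k+3) < mod f₀ (itr (m+1)) := lt_trans hfx hfy
        have h6 : itr (m+1+1) = mod f₀ (itr (m+1)) := hitsucc (m+1)
        rcases le_or_gt (itr (m+1)) (e (k+1)) with hc1 | hc
        · refine ⟨m+1, k+1, by omega, ?_⟩
          intro v hv
          rw [Set.mem_Ico] at hv ⊢
          have h5 : e (k+1+1) ≤ e (k+3) := hemono.monotone (by omega)
          omega
        · rcases le_or_gt (e (k+2)) (itr (m+1)) with hc2 | hc2
          · refine ⟨m, k+1, by omega, ?_⟩
            intro v hv
            rw [Set.mem_Ico] at hv ⊢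
            have h5 : e (k+1+1) = e (k+2) := rfl
            omega
          · refine ⟨m+1, k+2, ?_, ?_⟩
            · have h7 : e (k+1) ≤ e (k+2) := hemono.monotone (by omega)
              omega
            · intro v hv
              rw [Set.mem_Ico] at hv ⊢
              have h5 : e (k+2+1) = e (k+3) := rfl
              omega
      have hAfinf : Af.Infinite := by
        by_contra hfin
        rw [Set.not_infinite] at hfin
        obtain ⟨R, hR⟩ := hfin.bddAbove
        have hsubT : {x | e (x+3) < mod f₀ x} ⊆ Set.Iio (itr (R+1)) := by
          intro x hx
          obtain ⟨M, l, hxl, hsub⟩ := hclaim x hx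
          have hMR : M ≤ R := hR ⟨l, hsub⟩
          have hel : e l ∈ Set.Ico (itr M) (itr (M+1)) :=
            hsub ⟨le_refl _, hemono (by omega)⟩
          have h1 : e l < itr (M+1) := hel.2
          have h2 : itr (M+1) ≤ itr (R+1) := hitmono.monotone (by omega)
          rw [Set.mem_Iio]
          omega
        exact hT' ((Set.finite_Iio _).subset hsubT)
      obtain ⟨S, hS𝒮₀, hsplit⟩ := h𝒮₀.2 Af hAfinf
      set lf : ℕ → ℕ := fun M =>
        if h : ∃ l, Set.Ico (e l) (e (l+1)) ⊆ Set.Ico (itr M) (itr (M+1))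
        then h.choose else 0 with hlf
      have hlfspec : ∀ M ∈ Af,
          Set.Ico (e (lf M)) (e (lf M + 1)) ⊆ Set.Ico (itr M) (itr (M+1)) := by
        intro M hM
        have hM' : ∃ l, Set.Ico (e l) (e (l+1)) ⊆ Set.Ico (itr M) (itr (M+1)) := hM
        have hlfeq : lf M = hM'.choose := dif_pos hM'
        rw [hlfeq]
        exact hM'.choose_spec
      have hlfinj : ∀ a ∈ Af, ∀ b ∈ Af, lf a = lf b → a = b := by
        intro a ha b hb hab
        have h1 : e (lf a) ∈ Set.Ico (itr a) (itr (a+1)) :=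
          hlfspec a ha ⟨le_refl _, hemono (by omega)⟩
        have h2 : e (lf b) ∈ Set.Ico (itr b) (itr (b+1)) :=
          hlfspec b hb ⟨le_refl _, hemono (by omega)⟩
        rw [← hab] at h2
        exact hJdisj h1.1 h1.2 h2.1 h2.2
      refine ⟨DD (mod f₀) S, ⟨(⟨f₀, hf₀F⟩, ⟨S, hS𝒮₀⟩), rfl⟩, ?_, ?_⟩
      · have himg : (lf '' (Af ∩ S)).Infinite :=
          hsplit.1.image (fun a ha b hb hab => hlfinj a ha.1 b hb.1 hab)
        refine Set.Infinite.mono ?_ himg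
        rintro l ⟨M, hM, rfl⟩
        show Set.Ico (e (lf M)) (e (lf M + 1)) ⊆ DD (mod f₀) S
        intro v hv
        have hvJ := hlfspec M hM.1 hv
        exact ⟨M, hM.2, hvJ.1, hvJ.2⟩
      · have himg : (lf '' (Af \ S)).Infinite :=
          hsplit.2.image (fun a ha b hb hab => hlfinj a ha.1 b hb.1 hab)
        refine Set.Infinite.mono ?_ himg
        rintro l ⟨M, hM, rfl⟩
        show Set.Ico (e (lf M)) (e (lf M + 1)) ∩ DD (mod f₀) S = ∅
        rw [Set.eq_empty_iff_forall_notMem]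
        rintro v ⟨hv1, m, hmS, hm1, hm2⟩
        have hvJ := hlfspec M hM.1 hv1
        have : m = M := hJdisj hm1 hm2 hvJ.1 hvJ.2
        subst this
        exact hM.2 hmS
  have hbs1 : bsNumber ≤ Cardinal.mk 𝒮₁ := csInf_le (OrderBot.bddBelow _) ⟨𝒮₁, hblock, rfl⟩
  have hmk : Cardinal.mk 𝒮₁ ≤ bNumber * sNumber := by
    calc Cardinal.mk 𝒮₁ ≤ Cardinal.mk (↥F₀ × ↥𝒮₀) := Cardinal.mk_range_le
    _ = Cardinal.mk ↥F₀ * Cardinal.mk ↥𝒮₀ := by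
        rw [Cardinal.mk_prod]; simp
    _ = bNumber * sNumber := by rw [hF₀mk', h𝒮₀mk']
  have hmax : bNumber * sNumber ≤ max bNumber sNumber := by
    have h1 := Cardinal.mul_le_max bNumber sNumber
    have h2 : Cardinal.aleph0 ≤ max bNumber sNumber :=
      le_trans aleph0_le_b (le_max_left _ _)
    exact h1.trans (max_le (le_refl _) h2)
  exact hbs1.trans (hmk.trans hmax)


/-- For every `n ≥ 1`, every block-splitting family is `L_n`-splitting; hence
`μ_n ≤ 𝔟𝔰 = max {𝔟, 𝔰}`. -/
theorem blockSplitting_is_lSplitting :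
    ∀ n : ℕ, 1 ≤ n →
      (∀ 𝒮 : Set (Set ℕ), IsBlockSplittingFamily 𝒮 → IsLSplittingFamily n 𝒮) ∧
      muNumber n ≤ bsNumber ∧ bsNumber = max bNumber sNumber := by
  intro n hn
  refine ⟨fun 𝒮 h => blockToL n hn 𝒮 h, mu_le_bs n hn, ?_⟩
  exact le_antisymm bs_le_max (max_le b_le_bs s_le_bs)
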